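/- Define G(r, p, ε) = (200/(1-ε))·(1.04 + r·p + √r)·log(1/ε) for r ≥ 0, p ∈ [0,1], ε ∈ (0, 1/2]. Then for any positive integer n, ∑_{i=0}^{⌊log n⌋ + 1} G(e^i, p, ε) ≤ ∫_0^{log(n)+2} G(e^s, p, ε) ds ≤ e^2 · G(n, p, ε). -/

import Mathlib

noncomputable def G (r p ε : ℝ) : ℝ :=
  (200 / (1 - ε)) * (1.04 + r * p + Real.sqrt r) * Real.log (1 / ε)

lemma log_mul_exp_le (x : ℝ) (hx : 0 < x) : Real.log x * Real.exp 1 ≤ x := by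
  have h := Real.add_one_le_exp (Real.log x - 1)
  have he : Real.exp (Real.log x - 1) = x / Real.exp 1 := by
    rw [Real.exp_sub, Real.exp_log hx]
  rw [he] at h
  have hepos : (0:ℝ) < Real.exp 1 := Real.exp_pos 1
  have : (Real.log x - 1 + 1) * Real.exp 1 ≤ x / Real.exp 1 * Real.exp 1 := by
    exact mul_le_mul_of_nonneg_right h hepos.le
  rwa [div_mul_cancel₀ _ hepos.ne', sub_add_cancel] at this

lemma log_le_two_sqrt (x : ℝ) (hx : 0 < x) :
    Real.log x * Real.exp 1 ≤ 2 * Real.sqrt x := by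
  have hs : 0 < Real.sqrt x := Real.sqrt_pos.2 hx
  have h := log_mul_exp_le (Real.sqrt x) hs
  rw [Real.log_sqrt hx.le] at h
  nlinarith [Real.exp_pos 1]

/-- Integral comparison step bounding the expected query count of geometric
quantum search: ∑_{i=0}^{⌊log n⌋+1} G(e^i,p,ε) ≤ ∫_0^{log n + 2} G(e^s,p,ε) ds
≤ e^2 G(n,p,ε). -/
theorem sum_le_integral_le_e_sq_G (p ε : ℝ) (hp0 : 0 ≤ p) (hp1 : p ≤ 1)
    (hε0 : 0 < ε) (hε1 : ε ≤ 1 / 2) (n : ℕ) (hn : 0 < n) :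
    (∑ i ∈ Finset.range (⌊Real.log n⌋₊ + 2), G (Real.exp i) p ε) ≤
      (∫ s in (0 : ℝ)..(Real.log n + 2), G (Real.exp s) p ε) ∧
    (∫ s in (0 : ℝ)..(Real.log n + 2), G (Real.exp s) p ε) ≤
      Real.exp 2 * G n p ε := by
  have hε1' : ε < 1 := lt_of_le_of_lt hε1 (by norm_num)
  set C : ℝ := 200 / (1 - ε) with hC
  set L : ℝ := Real.log (1 / ε) with hLdef
  have hCpos : 0 < C := by
    apply div_pos (by norm_num); linarith
  have hL : 0 ≤ L := Real.log_nonneg (by rw [le_div_iff₀ hε0]; linarith)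
  set f : ℝ → ℝ := fun s => G (Real.exp s) p ε with hf
  have hfeq : ∀ s, f s = C * L * (1.04 + p * Real.exp s + Real.exp (s / 2)) := by
    intro s
    simp only [hf, G, ← hC, ← hLdef, Real.exp_half]
    ring
  have hcont : Continuous f := by
    have : f = fun s => C * L * (1.04 + p * Real.exp s + Real.exp (s / 2)) :=
      funext hfeq
    rw [this]; fun_prop
  have hmono : Monotone f := by
    intro s t hst
    rw [hfeq s, hfeq t]
    have h1 : Real.exp s ≤ Real.exp t := Real.exp_le_exp.2 hst
    have h2 : Real.exp (s / 2) ≤ Real.exp (t / 2) := Real.exp_le_exp.2 (by linarith)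
    have hCL : 0 ≤ C * L := mul_nonneg hCpos.le hL
    gcongr
  have hn1 : (1:ℝ) ≤ (n:ℝ) := by exact_mod_cast hn
  have hlogn : 0 ≤ Real.log n := Real.log_nonneg hn1
  have hfloor : (⌊Real.log n⌋₊ : ℝ) ≤ Real.log n := Nat.floor_le hlogn
  constructor
  · have h1 : (∑ i ∈ Finset.range (⌊Real.log n⌋₊ + 2), f ((0:ℝ) + i)) ≤
        ∫ s in (0:ℝ)..(0 + (⌊Real.log n⌋₊ + 2 : ℕ)), f s :=
      (hmono.monotoneOn _).sum_le_integral
    simp only [zero_add] at h1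
    refine le_trans (by exact_mod_cast h1) ?_
    apply intervalIntegral.integral_mono_interval le_rfl
    · push_cast; linarith
    · push_cast; linarith
    · filter_upwards with s
      rw [hfeq s]
      positivity
    · exact hcont.intervalIntegrable _ _
  · -- compute the integral
    set T : ℝ := Real.log n + 2 with hT
    have hderiv : ∀ s ∈ Set.uIcc (0:ℝ) T, HasDerivAt
        (fun s => C * L * (1.04 * s + p * Real.exp s + 2 * Real.exp (s / 2))) (f s) s := by
      intro s _
      rw [hfeq s]
      have h1 : HasDerivAt (fun s : ℝ => 1.04 * s) 1.04 s := by
        simpa using (hasDerivAt_id s).const_mul (1.04 : ℝ)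
      have h2 : HasDerivAt (fun s : ℝ => p * Real.exp s) (p * Real.exp s) s :=
        (Real.hasDerivAt_exp s).const_mul p
      have h3 : HasDerivAt (fun s : ℝ => Real.exp (s / 2)) (Real.exp (s / 2) * (1 / 2)) s := by
        have := (Real.hasDerivAt_exp (s / 2)).comp s
          ((hasDerivAt_id s).div_const 2)
        simpa [Function.comp_def] using this
      have h3' := h3.const_mul (2:ℝ)
      have := ((h1.add h2).add h3').const_mul (C * L)
      exact this.congr_deriv (by ring)
    have hint : (∫ s in (0:ℝ)..T, f s) =
        C * L * (1.04 * T + p * Real.exp T + 2 * Real.exp (T / 2)) -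
        C * L * (1.04 * 0 + p * Real.exp 0 + 2 * Real.exp (0 / 2)) :=
      intervalIntegral.integral_eq_sub_of_hasDerivAt hderiv
        (hcont.intervalIntegrable _ _)
    have hexpT : Real.exp T = n * Real.exp 2 := by
      rw [hT, Real.exp_add, Real.exp_log (by exact_mod_cast hn)]
    have hexpT2 : Real.exp (T / 2) = Real.sqrt n * Real.exp 1 := by
      have : T / 2 = Real.log n / 2 + 1 := by rw [hT]; ring
      rw [this, Real.exp_add, ← Real.log_sqrt (by positivity),
        Real.exp_log (Real.sqrt_pos.2 (by exact_mod_cast hn))]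
    have h0 : Real.exp (0:ℝ) = 1 := Real.exp_zero
    have h00 : Real.exp ((0:ℝ) / 2) = 1 := by norm_num [Real.exp_zero]
    rw [hint, hexpT, hexpT2, h0, h00]
    have hkey : 1.04 * T + p * (n * Real.exp 2) + 2 * (Real.sqrt n * Real.exp 1) -
        (1.04 * 0 + p * 1 + 2 * 1) ≤
        Real.exp 2 * (1.04 + n * p + Real.sqrt n) := by
      have hlog2 : Real.log n * Real.exp 1 ≤ 2 * Real.sqrt n :=
        log_le_two_sqrt n (by exact_mod_cast hn)
      have he1 : (2.7182818283:ℝ) < Real.exp 1 := Real.exp_one_gt_d9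
      have he2 : Real.exp 1 < 2.7182818286 := Real.exp_one_lt_d9
      have hesq : Real.exp 2 = Real.exp 1 * Real.exp 1 := by
        rw [← Real.exp_add]; norm_num
      have hsn : 0 ≤ Real.sqrt n := Real.sqrt_nonneg n
      rw [hT, hesq]
      nlinarith [hlog2, hsn, hlogn, hp0,
        mul_nonneg hlogn (by linarith : (0:ℝ) ≤ Real.exp 1 - 2.7182818283),
        mul_nonneg hsn (by linarith : (0:ℝ) ≤ Real.exp 1 - 2.7182818283),
        mul_nonneg hsn (sq_nonneg (Real.exp 1 - 2.7182818283)),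
        sq_nonneg (Real.exp 1 - 2.7182818283)]
    have hfin : C * L * (1.04 * T + p * (n * Real.exp 2) + 2 * (Real.sqrt n * Real.exp 1)) -
        C * L * (1.04 * 0 + p * 1 + 2 * 1) ≤
        C * L * (Real.exp 2 * (1.04 + n * p + Real.sqrt n)) := by
      rw [← mul_sub]
      exact mul_le_mul_of_nonneg_left hkey (mul_nonneg hCpos.le hL)
    calc C * L * (1.04 * T + p * (n * Real.exp 2) + 2 * (Real.sqrt n * Real.exp 1)) -
          C * L * (1.04 * 0 + p * 1 + 2 * 1)
        ≤ C * L * (Real.exp 2 * (1.04 + n * p + Real.sqrt n)) := hfin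
      _ = Real.exp 2 * G n p ε := by rw [G, ← hC, ← hLdef]; ring
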